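/- Let A be an associative ring with 1 and let U be a two-sided ideal of A that is nilpotent, i.e., U^m = 0 for some m ≥ 1. Then H = { u ∈ A^× : u − 1 ∈ U } is a normal subgroup of the group A^× of invertible elements of A, and H is a nilpotent group. -/

import Mathlib

/-- Engel words with the convention of the paper: the commutator is
`[x, y] = x⁻¹ * y⁻¹ * x * y`, `engelWord 0 x y = x` and
`engelWord (n+1) x y = [engelWord n x y, y]`; thus for `n ≥ 1`,
`engelWord n x y` is the Engel word `e_n(x, y)`. -/
def engelWord {G : Type*} [Group G] : ℕ → G → G → G
  | 0, x, _ => x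
  | n + 1, x, y => (engelWord n x y)⁻¹ * y⁻¹ * engelWord n x y * y

/-- Iterated Engel words: `epsEngel [(n₁,a₁),…,(n_k,a_k)] y` is
`ε_{(n₁,…,n_k)}(a₁,…,a_k; y)`, defined by `ε_{(n₁)}(a₁;y) = e_{n₁}(a₁,y)` and
`ε_{(n₁,…,n_k)}(a₁,…,a_k;y) = e_{n_k}(a_k, ε_{(n₁,…,n_{k-1})}(a₁,…,a_{k-1};y))`. -/
def epsEngel {G : Type*} [Group G] (l : List (ℕ × G)) (y : G) : G :=
  l.foldl (fun z p => engelWord p.1 p.2 z) y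

/-- `g` is a nil-element if for every `a` there is `n ≥ 1` with `e_n(a, g) = 1`. -/
def IsNilElement {G : Type*} [Group G] (g : G) : Prop :=
  ∀ a : G, ∃ n, 1 ≤ n ∧ engelWord n a g = 1

/-- A group is locally nilpotent if every finitely generated subgroup is nilpotent. -/
def LocallyNilpotent (G : Type*) [Group G] : Prop :=
  ∀ H : Subgroup G, H.FG → Group.IsNilpotent H

/-- `g` is quasi-nil of order ≤ `k`: there are functions `ν i : G^(i+1) → ℕ` (with values ≥ 1,
`ν i` depending only on `a₁,…,a_{i+1}` and `g`) such that for all `a : Fin k → G`,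
`ε_{(ν₁(a₁),…,ν_k(a₁,…,a_k))}(a₁,…,a_k; g) = 1`. -/
def IsQuasiNilOfOrder {G : Type*} [Group G] (k : ℕ) (g : G) : Prop :=
  ∃ ν : ∀ i : Fin k, (Fin ((i : ℕ) + 1) → G) → ℕ,
    (∀ i f, 1 ≤ ν i f) ∧
    ∀ a : Fin k → G,
      epsEngel (List.ofFn fun i : Fin k =>
        (ν i fun j => a (Fin.castLE i.isLt j), a i)) g = 1

/-- `g` is quasi-nil if it is quasi-nil of order ≤ `k` for some `k ≥ 1`. -/
def IsQuasiNil {G : Type*} [Group G] (g : G) : Prop :=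
  ∃ k, 1 ≤ k ∧ IsQuasiNilOfOrder k g

/-- `g` maps to a nil-element of the quotient `G ⧸ N` (for `N` normal). -/
def IsNilElementQuot {G : Type*} [Group G] (N : Subgroup G) (hN : N.Normal) (g : G) : Prop :=
  @IsNilElement (G ⧸ N) (@QuotientGroup.Quotient.group G _ N hN) (QuotientGroup.mk g)


section PowAux
variable {A : Type*} [Ring A] (U : TwoSidedIdeal A)

def Sgen (n : ℕ) : Set A := {x | ∃ f : Fin n → A, (∀ i, f i ∈ U) ∧ (List.ofFn f).prod = x}

def Ppow (n : ℕ) : AddSubgroup A := AddSubgroup.closure (Sgen U n)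

lemma mem_Ppow_of_mem {u : A} (hu : u ∈ U) : u ∈ Ppow U 1 :=
  AddSubgroup.subset_closure ⟨fun _ => u, fun _ => hu, by simp⟩

lemma Ppow_mul {i j : ℕ} {x y : A} (hx : x ∈ Ppow U i) (hy : y ∈ Ppow U j) :
    x * y ∈ Ppow U (i + j) := by
  have key : ∀ y' ∈ Sgen U j, ∀ x' ∈ Ppow U i, x' * y' ∈ Ppow U (i + j) := by
    rintro y' ⟨g, hg, rfl⟩ x' hx'
    have : Ppow U i ≤ (Ppow U (i + j)).comap (AddMonoidHom.mulRight (List.ofFn g).prod) := by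
      apply AddSubgroup.closure_le _ |>.mpr
      rintro z ⟨f, hf, rfl⟩
      refine AddSubgroup.subset_closure ⟨Fin.append f g, fun k => ?_, ?_⟩
      · refine Fin.addCases (fun i => ?_) (fun i => ?_) k
        · rw [Fin.append_left]; exact hf i
        · rw [Fin.append_right]; exact hg i
      · rw [List.ofFn_fin_append, List.prod_append]; rfl
    exact this hx'
  have : Ppow U j ≤ (Ppow U (i + j)).comap (AddMonoidHom.mulLeft x) := by
    apply AddSubgroup.closure_le _ |>.mpr
    intro y' hy'
    exact key y' hy' x hx
  exact this hy

lemma Sgen_succ_decomp {n : ℕ} {x : A} (hx : x ∈ Sgen U (n + 1)) :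
    ∃ u t, u ∈ U ∧ t ∈ Sgen U n ∧ x = u * t := by
  obtain ⟨f, hf, rfl⟩ := hx
  exact ⟨f 0, (List.ofFn fun i : Fin n => f i.succ).prod, hf 0,
    ⟨_, fun i => hf i.succ, rfl⟩, by rw [List.ofFn_succ, List.prod_cons]⟩

lemma Ppow_mul_left {n : ℕ} (a : A) {x : A} (hx : x ∈ Ppow U (n + 1)) :
    a * x ∈ Ppow U (n + 1) := by
  have : Ppow U (n + 1) ≤ (Ppow U (n + 1)).comap (AddMonoidHom.mulLeft a) := by
    apply AddSubgroup.closure_le _ |>.mpr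
    intro z hz
    obtain ⟨u, t, hu, ht, rfl⟩ := Sgen_succ_decomp U hz
    show a * (u * t) ∈ Ppow U (n + 1)
    rw [← mul_assoc]
    have := Ppow_mul U (mem_Ppow_of_mem U (U.mul_mem_left a u hu)) (AddSubgroup.subset_closure ht)
    rwa [add_comm] at this
  exact this hx

lemma Ppow_mul_right {n : ℕ} (a : A) {x : A} (hx : x ∈ Ppow U (n + 1)) :
    x * a ∈ Ppow U (n + 1) := by
  induction n generalizing x a with
  | zero =>
    have : Ppow U 1 ≤ (Ppow U 1).comap (AddMonoidHom.mulRight a) := by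
      apply AddSubgroup.closure_le _ |>.mpr
      intro z hz
      obtain ⟨u, t, hu, ht, rfl⟩ := Sgen_succ_decomp U hz
      obtain ⟨f, _, rfl⟩ := ht
      show u * (List.ofFn f).prod * a ∈ Ppow U 1
      have : (List.ofFn f).prod = 1 := by simp [List.ofFn_zero]
      rw [this, mul_one]
      exact mem_Ppow_of_mem U (U.mul_mem_right u a hu)
    exact this hx
  | succ k ih =>
    have : Ppow U (k + 2) ≤ (Ppow U (k + 2)).comap (AddMonoidHom.mulRight a) := by
      apply AddSubgroup.closure_le _ |>.mpr
      intro z hz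
      obtain ⟨u, t, hu, ht, rfl⟩ := Sgen_succ_decomp U hz
      show u * t * a ∈ Ppow U (k + 2)
      rw [mul_assoc]
      have := Ppow_mul U (mem_Ppow_of_mem U hu) (ih a (AddSubgroup.subset_closure ht))
      rwa [add_comm] at this
    exact this hx

lemma Ppow_succ_le {n : ℕ} : Ppow U (n + 2) ≤ Ppow U (n + 1) := by
  apply AddSubgroup.closure_le _ |>.mpr
  intro z hz
  obtain ⟨u, t, hu, ht, rfl⟩ := Sgen_succ_decomp U hz
  exact Ppow_mul_left U u (AddSubgroup.subset_closure ht)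

end PowAux

/-- for a nilpotent two-sided ideal `U` of a ring `A` with 1,
`H = {u ∈ Aˣ : u - 1 ∈ U}` is a normal subgroup of `Aˣ`, and `H` is nilpotent. -/
theorem units_one_add_nilpotent_ideal_nilpotent (A : Type*) [Ring A]
    (U : TwoSidedIdeal A) (m : ℕ) (hm : 1 ≤ m)
    (hU : ∀ f : Fin m → A, (∀ i, f i ∈ U) → (List.ofFn f).prod = 0) :
    ∃ H : Subgroup Aˣ, (∀ u : Aˣ, u ∈ H ↔ (u : A) - 1 ∈ U) ∧ H.Normal ∧
      Group.IsNilpotent H := by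
  have inv_aux : ∀ u : Aˣ, (u : A) - 1 ∈ U → ((u⁻¹ : Aˣ) : A) - 1 ∈ U := by
    intro u hu
    have : ((u⁻¹ : Aˣ) : A) - 1 = -(((u⁻¹ : Aˣ) : A) * ((u : A) - 1)) := by
      rw [mul_sub, Units.inv_mul, mul_one, neg_sub]
    rw [this]
    exact U.neg_mem (U.mul_mem_left _ _ hu)
  let H : Subgroup Aˣ :=
    { carrier := {u : Aˣ | (u : A) - 1 ∈ U}
      one_mem' := by simp [U.zero_mem]
      mul_mem' := by
        intro u v hu hv
        have : ((u * v : Aˣ) : A) - 1 = (u : A) * ((v : A) - 1) + ((u : A) - 1) := by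
          push_cast; noncomm_ring
        show ((u * v : Aˣ) : A) - 1 ∈ U
        rw [this]
        exact U.add_mem (U.mul_mem_left _ _ hv) hu
      inv_mem' := fun hu => inv_aux _ hu }
  refine ⟨H, fun u => Iff.rfl, ?_, ?_⟩
  · constructor
    intro u hu g
    have : ((g * u * g⁻¹ : Aˣ) : A) - 1 = (g : A) * ((u : A) - 1) * ((g⁻¹ : Aˣ) : A) := by
      push_cast
      rw [mul_sub, mul_one, sub_mul, Units.mul_inv]
    show ((g * u * g⁻¹ : Aˣ) : A) - 1 ∈ U
    rw [this]
    exact U.mul_mem_right _ _ (U.mul_mem_left _ _ hu)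
  · have claim : ∀ n : ℕ, ∀ u : H, u ∈ (⊤ : Subgroup H).lowerCentralSeries n →
        ((u : Aˣ) : A) - 1 ∈ Ppow U (n + 1) := by
      intro n
      induction n with
      | zero => exact fun u _ => mem_Ppow_of_mem U u.2
      | succ n ih =>
        intro u hu
        let K : Subgroup H :=
          { carrier := {u : H | ((u : Aˣ) : A) - 1 ∈ Ppow U (n + 2)}
            one_mem' := by simp [AddSubgroup.zero_mem]
            mul_mem' := by
              intro u v hu hv
              have : (((u * v : H) : Aˣ) : A) - 1
                  = ((u : Aˣ) : A) * (((v : Aˣ) : A) - 1) + (((u : Aˣ) : A) - 1) := by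
                push_cast; noncomm_ring
              show (((u * v : H) : Aˣ) : A) - 1 ∈ Ppow U (n + 2)
              rw [this]
              exact AddSubgroup.add_mem _ (Ppow_mul_left U _ hv) hu
            inv_mem' := by
              intro u hu
              have : (((u⁻¹ : H) : Aˣ) : A) - 1
                  = -((((u⁻¹ : H) : Aˣ) : A) * (((u : Aˣ) : A) - 1)) := by
                push_cast
                rw [mul_sub, Units.inv_mul, mul_one, neg_sub]
              show (((u⁻¹ : H) : Aˣ) : A) - 1 ∈ Ppow U (n + 2)
              rw [this]
              exact AddSubgroup.neg_mem _ (Ppow_mul_left U _ hu) }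
        have hle : (⊤ : Subgroup H).lowerCentralSeries (n + 1) ≤ K := by
          rw [lowerCentralSeries_succ]
          apply Subgroup.closure_le _ |>.mpr
          rintro x ⟨p, hp, q, -, rfl⟩
          have hp1 : ((p : Aˣ) : A) - 1 ∈ Ppow U (n + 1) := ih p hp
          have hq1 : ((q : Aˣ) : A) - 1 ∈ Ppow U 1 := mem_Ppow_of_mem U q.2
          set P : A := ((p : Aˣ) : A) with hP
          set Q : A := ((q : Aˣ) : A) with hQ
          set Pi : A := (((p : Aˣ)⁻¹ : Aˣ) : A) with hPi
          set Qi : A := (((q : Aˣ)⁻¹ : Aˣ) : A) with hQi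
          have key : ((P - 1) * (Q - 1) - (Q - 1) * (P - 1)) * Pi * Qi
              = P * Q * Pi * Qi - 1 := by
            have h1 : P * Pi = 1 := Units.mul_inv _
            have h2 : Q * Qi = 1 := Units.mul_inv _
            calc ((P - 1) * (Q - 1) - (Q - 1) * (P - 1)) * Pi * Qi
                = P * Q * Pi * Qi - Q * (P * Pi) * Qi := by noncomm_ring
              _ = P * Q * Pi * Qi - 1 := by rw [h1, mul_one, h2]
          show (((p * q * p⁻¹ * q⁻¹ : H) : Aˣ) : A) - 1 ∈ Ppow U (n + 2)
          have hcoe : (((p * q * p⁻¹ * q⁻¹ : H) : Aˣ) : A) = P * Q * Pi * Qi := by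
            push_cast
            rw [hP, hQ, hPi, hQi]
          rw [hcoe, ← key]
          have t1 : (P - 1) * (Q - 1) ∈ Ppow U (n + 2) := Ppow_mul U (i := n + 1) (j := 1) hp1 hq1
          have t2 : (Q - 1) * (P - 1) ∈ Ppow U (n + 2) := by
            have := Ppow_mul U hq1 hp1
            rwa [add_comm] at this
          exact Ppow_mul_right U _ (Ppow_mul_right U _ (AddSubgroup.sub_mem _ t1 t2))
        exact hle hu
    have Pm : ∀ x ∈ Ppow U m, x = 0 := by
      have hb : Ppow U m ≤ ⊥ := by
        apply AddSubgroup.closure_le _ |>.mpr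
        rintro z ⟨f, hf, rfl⟩
        simpa using hU f hf
      intro x hx
      simpa using hb hx
    refine nilpotent_iff_lowerCentralSeries.mpr ⟨m - 1, ?_⟩
    rw [eq_bot_iff]
    intro u hu
    have h1 : ((u : Aˣ) : A) - 1 ∈ Ppow U (m - 1 + 1) := claim (m - 1) u hu
    rw [Nat.sub_add_cancel hm] at h1
    have h2 : ((u : Aˣ) : A) - 1 = 0 := Pm _ h1
    have h3 : (u : Aˣ) = 1 := Units.ext (by simpa [sub_eq_zero] using h2)
    simpa [Subgroup.mem_bot] using Subtype.ext h3
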